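/- Let (i₁, i₂, j₁, j₂) be a Milnor square with j₂ surjective. Then the map Λ₁ ⊗_Λ Λ₂ → Λ' defined by λ₁ ⊗ λ₂ ↦ j₁(λ₁)·j₂(λ₂) is an isomorphism of (Λ₁, Λ₂)-bimodules; in particular the pair (i₁, i₂) is exact. -/
import Mathlib


open scoped TensorProduct

universe u

/-- Tensor product over `Λ` of a right `Λ`-module and a left `Λ`-module. -/
noncomputable abbrev tensorOver (Λ : Type u) [Ring Λ] {A B : Type u}
    [AddCommGroup A] [AddCommGroup B]
    (ract : A → Λ → A) (lact : Λ → B → B) : Type u :=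
  (TensorProduct ℤ A B) ⧸
    AddSubgroup.closure {x : TensorProduct ℤ A B |
      ∃ (a : A) (r : Λ) (b : B), x = (ract a r) ⊗ₜ[ℤ] b - a ⊗ₜ[ℤ] (lact r b)}

section
variable {Λ Λ₁ Λ₂ Λ' : Type u} [Ring Λ] [Ring Λ₁] [Ring Λ₂] [Ring Λ']

/-- `Λ₁ ⊗_Λ Λ₂`, where `Λ₁` is a right `Λ`-module via `i₁` and `Λ₂` a left
`Λ`-module via `i₂`. -/
noncomputable abbrev Tens12 (i₁ : Λ →+* Λ₁) (i₂ : Λ →+* Λ₂) : Type u :=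
  tensorOver Λ (fun (a : Λ₁) (l : Λ) => a * i₁ l) (fun (l : Λ) (b : Λ₂) => i₂ l * b)

/-- The elementary tensor `a ⊗ b` in `Λ₁ ⊗_Λ Λ₂`. -/
noncomputable def e12 (i₁ : Λ →+* Λ₁) (i₂ : Λ →+* Λ₂) (a : Λ₁) (b : Λ₂) : Tens12 i₁ i₂ :=
  QuotientAddGroup.mk (a ⊗ₜ[ℤ] b)

lemma e12_rel (i₁ : Λ →+* Λ₁) (i₂ : Λ →+* Λ₂) (a : Λ₁) (l : Λ) (b : Λ₂) :
    e12 i₁ i₂ (a * i₁ l) b = e12 i₁ i₂ a (i₂ l * b) := by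
  apply (QuotientAddGroup.eq).2
  have h : (a * i₁ l) ⊗ₜ[ℤ] b - a ⊗ₜ[ℤ] (i₂ l * b) ∈
      AddSubgroup.closure {x : TensorProduct ℤ Λ₁ Λ₂ |
        ∃ (a' : Λ₁) (r : Λ) (b' : Λ₂), x = (a' * i₁ r) ⊗ₜ[ℤ] b' - a' ⊗ₜ[ℤ] (i₂ r * b')} :=
    AddSubgroup.subset_closure ⟨a, l, b, rfl⟩
  have h2 := AddSubgroup.neg_mem _ h
  rw [neg_sub, sub_eq_neg_add] at h2
  exact h2

lemma e12_add_right (i₁ : Λ →+* Λ₁) (i₂ : Λ →+* Λ₂) (a : Λ₁) (b b' : Λ₂) :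
    e12 i₁ i₂ a (b + b') = e12 i₁ i₂ a b + e12 i₁ i₂ a b' := by
  unfold e12; rw [TensorProduct.tmul_add]; rfl

lemma e12_neg_right (i₁ : Λ →+* Λ₁) (i₂ : Λ →+* Λ₂) (a : Λ₁) (b : Λ₂) :
    e12 i₁ i₂ a (-b) = - e12 i₁ i₂ a b := by
  unfold e12; rw [TensorProduct.tmul_neg]; rfl

lemma e12_zero_left (i₁ : Λ →+* Λ₁) (i₂ : Λ →+* Λ₂) (b : Λ₂) :
    e12 i₁ i₂ 0 b = 0 := by
  unfold e12; rw [TensorProduct.zero_tmul]; rfl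

lemma e12_zero_right (i₁ : Λ →+* Λ₁) (i₂ : Λ →+* Λ₂) (a : Λ₁) :
    e12 i₁ i₂ a 0 = 0 := by
  unfold e12; rw [TensorProduct.tmul_zero]; rfl

/-- For a Milnor square `(i₁, i₂, j₁, j₂)` with `j₂` surjective, the
map `Λ₁ ⊗_Λ Λ₂ → Λ'`, `a ⊗ b ↦ j₁(a)·j₂(b)`, is an isomorphism of
`(Λ₁, Λ₂)`-bimodules; in particular the pair `(i₁, i₂)` is exact (i.e.
`(i₁, i₂, Λ₁ ⊗_Λ Λ₂, 1 ⊗ 1)` is an exact context). -/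
theorem stmt9 (i₁ : Λ →+* Λ₁) (i₂ : Λ →+* Λ₂) (j₁ : Λ₁ →+* Λ') (j₂ : Λ₂ →+* Λ')
    (hcomm : j₁.comp i₁ = j₂.comp i₂)
    (hpb : ∀ (a : Λ₁) (b : Λ₂), j₁ a = j₂ b → ∃! l : Λ, i₁ l = a ∧ i₂ l = b)
    (hsurj : Function.Surjective j₂)
    (θ : Tens12 i₁ i₂ →+ Λ')
    (hθ : ∀ (a : Λ₁) (b : Λ₂), θ (e12 i₁ i₂ a b) = j₁ a * j₂ b) :
    Function.Bijective θ ∧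
    (Function.Injective (fun l : Λ => (i₁ l, i₂ l)) ∧
     (∀ (a : Λ₁) (b : Λ₂),
        e12 i₁ i₂ a 1 = e12 i₁ i₂ 1 b ↔ ∃ l : Λ, i₁ l = a ∧ i₂ l = b) ∧
     (∀ x : Tens12 i₁ i₂, ∃ (a : Λ₁) (b : Λ₂),
        x = e12 i₁ i₂ a 1 - e12 i₁ i₂ 1 b)) := by
  -- i₁ is surjective
  have hi₁ : ∀ a : Λ₁, ∃ l : Λ, i₁ l = a := by
    intro a
    obtain ⟨b, hb⟩ := hsurj (j₁ a)
    obtain ⟨l, ⟨hl1, _⟩, _⟩ := hpb a b hb.symm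
    exact ⟨l, hl1⟩
  -- left-one reduction
  have hleft : ∀ (a : Λ₁) (b : Λ₂), ∃ l : Λ, i₁ l = a ∧
      e12 i₁ i₂ a b = e12 i₁ i₂ 1 (i₂ l * b) := by
    intro a b
    obtain ⟨l, hl⟩ := hi₁ a
    refine ⟨l, hl, ?_⟩
    have := e12_rel i₁ i₂ 1 l b
    rwa [one_mul, hl] at this
  -- every element is e12 1 b
  have key : ∀ x : Tens12 i₁ i₂, ∃ b : Λ₂, x = e12 i₁ i₂ 1 b := by
    intro x
    obtain ⟨t, rfl⟩ := QuotientAddGroup.mk_surjective x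
    induction t using TensorProduct.induction_on with
    | zero => exact ⟨0, (e12_zero_right i₁ i₂ 1).symm⟩
    | tmul a b =>
        obtain ⟨l, _, h⟩ := hleft a b
        exact ⟨i₂ l * b, h⟩
    | add s t hs ht =>
        obtain ⟨b1, h1⟩ := hs
        obtain ⟨b2, h2⟩ := ht
        refine ⟨b1 + b2, ?_⟩
        have hmk : (QuotientAddGroup.mk (s + t) : Tens12 i₁ i₂)
            = QuotientAddGroup.mk s + QuotientAddGroup.mk t := rfl
        rw [hmk, h1, h2, e12_add_right]
  -- if b comes from l with i₁ l = 0 then e12 1 b = 0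
  have hker : ∀ (l : Λ), i₁ l = 0 → e12 i₁ i₂ 1 (i₂ l) = 0 := by
    intro l hl
    have h := e12_rel i₁ i₂ 1 l 1
    rw [one_mul, hl, mul_one, e12_zero_left] at h
    exact h.symm
  have hcomm' : ∀ l : Λ, j₁ (i₁ l) = j₂ (i₂ l) := fun l => RingHom.congr_fun hcomm l
  refine ⟨⟨?_, ?_⟩, ?_, ?_, ?_⟩
  · -- injective θ
    rw [injective_iff_map_eq_zero]
    intro x hx
    obtain ⟨b, rfl⟩ := key x
    rw [hθ, map_one, one_mul] at hx
    obtain ⟨l, ⟨hl1, hl2⟩, _⟩ := hpb 0 b (by rw [map_zero, hx])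
    rw [← hl2]
    exact hker l hl1
  · -- surjective θ
    intro x'
    obtain ⟨b, hb⟩ := hsurj x'
    exact ⟨e12 i₁ i₂ 1 b, by rw [hθ, map_one, one_mul, hb]⟩
  · -- injective pullback
    intro l l' h
    simp only [Prod.mk.injEq] at h
    obtain ⟨m, _, hm⟩ := hpb (i₁ l) (i₂ l) (hcomm' l)
    rw [hm l ⟨rfl, rfl⟩, hm l' ⟨h.1.symm, h.2.symm⟩]
  · -- exactness characterization
    intro a b
    constructor
    · intro h
      have := congrArg θ h
      rw [hθ, hθ, map_one, map_one, mul_one, one_mul] at this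
      obtain ⟨l, hl, _⟩ := hpb a b this
      exact ⟨l, hl⟩
    · rintro ⟨l, rfl, rfl⟩
      have h := e12_rel i₁ i₂ 1 l 1
      rwa [one_mul, mul_one] at h
  · -- every element is a difference
    intro x
    obtain ⟨b, rfl⟩ := key x
    refine ⟨0, -b, ?_⟩
    rw [e12_zero_left, e12_neg_right, zero_sub, neg_neg]

end
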